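/- arXiv:1105.6122 — 2 statements merged into one kernel-verified Lean document; each statement's English description precedes it below -/
import Mathlib

section
/- The function f(r) = (r/(r²-1))·log(r²), defined for real r with r² ≠ 1 (and extended by f(±1) = 1 via limits), is an odd function, satisfies f(1/r) = f(r) for r ≠ 0, is monotonically increasing on the interval (-1, 1), and is monotonically decreasing on (1, ∞). -/
open Real Set

/-- f(r) = (r/(r²-1))·log(r²), with f(0) = 0 and the limiting values f(±1) = 1. -/
noncomputable def fAux (r : ℝ) : ℝ :=
  if r = 1 ∨ r = -1 then 1 else (r / (r ^ 2 - 1)) * Real.log (r ^ 2)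

private lemma log_lower {x : ℝ} (hx : 0 < x) (hne : x ≠ 1) : 1 - 1/x < Real.log x := by
  have h := Real.log_lt_sub_one_of_pos (inv_pos.mpr hx) (fun h => hne (inv_eq_one.mp h))
  rw [Real.log_inv] at h
  rw [one_div]
  linarith

private lemma hasDerivAt_g {x : ℝ} (hx : 0 < x) :
    HasDerivAt (fun x : ℝ => (x + 1) * Real.log x - 2 * (x - 1))
      (Real.log x + 1/x - 1) x := by
  have h1 : HasDerivAt (fun x : ℝ => (x + 1) * Real.log x)
      (1 * Real.log x + (x + 1) * x⁻¹) x :=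
    ((hasDerivAt_id x).add_const 1).mul (Real.hasDerivAt_log (ne_of_gt hx))
  have h2 : HasDerivAt (fun x : ℝ => 2 * (x - 1)) (2 * 1) x :=
    ((hasDerivAt_id x).sub_const 1).const_mul 2
  convert h1.sub h2 using 1
  all_goals try rfl
  field_simp
  ring

private lemma g_cont : ContinuousOn (fun x : ℝ => (x + 1) * Real.log x - 2 * (x - 1))
    {x : ℝ | 0 < x} := by
  intro x hx
  exact ((hasDerivAt_g hx).continuousAt).continuousWithinAt

private lemma key_gt {x : ℝ} (hx : 1 < x) : 2 * (x - 1) < (x + 1) * Real.log x := by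
  have mono : StrictMonoOn (fun x : ℝ => (x + 1) * Real.log x - 2 * (x - 1)) (Ici 1) := by
    apply strictMonoOn_of_deriv_pos (convex_Ici 1)
    · exact g_cont.mono (fun y (hy : (1:ℝ) ≤ y) => show (0:ℝ) < y from lt_of_lt_of_le one_pos hy)
    · intro y hy
      rw [interior_Ici] at hy
      have hy0 : (0:ℝ) < y := lt_trans one_pos hy
      rw [(hasDerivAt_g hy0).deriv]
      have := log_lower hy0 (ne_of_gt hy)
      linarith
  have h := mono (self_mem_Ici) (mem_Ici.mpr hx.le) hx
  simp only [Real.log_one] at h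
  nlinarith [h]

private lemma key_lt {x : ℝ} (hx0 : 0 < x) (hx1 : x < 1) :
    (x + 1) * Real.log x < 2 * (x - 1) := by
  have mono : StrictMonoOn (fun x : ℝ => (x + 1) * Real.log x - 2 * (x - 1)) (Ioc 0 1) := by
    apply strictMonoOn_of_deriv_pos (convex_Ioc 0 1)
    · exact g_cont.mono (fun y hy => hy.1)
    · intro y hy
      rw [interior_Ioc] at hy
      rw [(hasDerivAt_g hy.1).deriv]
      have := log_lower hy.1 (ne_of_lt hy.2)
      linarith
  have h := mono (mem_Ioc.mpr ⟨hx0, hx1.le⟩) (right_mem_Ioc.mpr one_pos) hx1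
  simp only [Real.log_one] at h
  nlinarith [h]

private lemma sq_sub_one_ne {r : ℝ} (h1 : r ≠ 1) (h2 : r ≠ -1) : r ^ 2 - 1 ≠ 0 := by
  have : r ^ 2 - 1 = (r - 1) * (r + 1) := by ring
  rw [this]
  exact mul_ne_zero (sub_ne_zero.mpr h1) (by intro h; exact h2 (by linarith))

private lemma fAux_eq {r : ℝ} (h1 : r ≠ 1) (h2 : r ≠ -1) :
    fAux r = (r / (r ^ 2 - 1)) * Real.log (r ^ 2) := by
  simp [fAux, h1, h2]

private lemma hasDerivAt_fAux {r : ℝ} (h0 : r ≠ 0) (h1 : r ≠ 1) (h2 : r ≠ -1) :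
    HasDerivAt fAux
      ((2 * (r ^ 2 - 1) - (r ^ 2 + 1) * Real.log (r ^ 2)) / (r ^ 2 - 1) ^ 2) r := by
  have hr2 : r ^ 2 - 1 ≠ 0 := sq_sub_one_ne h1 h2
  have hsq : r ^ 2 ≠ 0 := pow_ne_zero 2 h0
  have hd : HasDerivAt (fun r : ℝ => r ^ 2 - 1) (2 * r ^ 1) r :=
    (hasDerivAt_pow 2 r).sub_const 1
  have hu : HasDerivAt (fun r : ℝ => r / (r ^ 2 - 1))
      ((1 * (r ^ 2 - 1) - r * (2 * r ^ 1)) / (r ^ 2 - 1) ^ 2) r :=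
    (hasDerivAt_id r).div hd hr2
  have hlog : HasDerivAt (fun r : ℝ => Real.log (r ^ 2)) (((2:ℕ) * r ^ (2-1)) / r ^ 2) r :=
    (hasDerivAt_pow 2 r).log hsq
  have hF := hu.mul hlog
  have heq : fAux =ᶠ[nhds r] (fun r : ℝ => (r / (r ^ 2 - 1)) * Real.log (r ^ 2)) := by
    have hopen : IsOpen {x : ℝ | x ≠ 1 ∧ x ≠ -1} := by
      have : {x : ℝ | x ≠ 1 ∧ x ≠ -1} = ({1, -1} : Set ℝ)ᶜ := by
        ext x; simp [not_or]
      rw [this]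
      exact ((Set.finite_singleton (-1 : ℝ)).insert 1).isClosed.isOpen_compl
    filter_upwards [hopen.mem_nhds ⟨h1, h2⟩] with x hx
    exact fAux_eq hx.1 hx.2
  have := hF.congr_of_eventuallyEq heq
  convert this using 1
  all_goals try rfl
  field_simp
  ring

/-- The function `f(r) = (r/(r²-1))·log(r²)` is odd (away from the extension points `±1`),
satisfies `f(1/r) = f(r)` for `r ≠ 0`, is strictly monotonically increasing on `(-1, 1)`
and strictly monotonically decreasing on `(1, ∞)`. -/
theorem fAux_properties :
    (∀ r : ℝ, r ≠ 1 → r ≠ -1 → fAux (-r) = -fAux r) ∧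
    (∀ r : ℝ, r ≠ 0 → fAux (1 / r) = fAux r) ∧
    StrictMonoOn fAux (Ioo (-1 : ℝ) 1) ∧
    StrictAntiOn fAux (Ioi (1 : ℝ)) := by
  have odd : ∀ r : ℝ, r ≠ 1 → r ≠ -1 → fAux (-r) = -fAux r := by
    intro r h1 h2
    have h1' : -r ≠ 1 := fun h => h2 (by linarith [h])
    have h2' : -r ≠ -1 := fun h => h1 (by linarith [neg_eq_iff_eq_neg.mp h])
    rw [fAux_eq h1' h2', fAux_eq h1 h2, neg_pow]
    ring_nf
  have inv_eq' : ∀ r : ℝ, r ≠ 0 → fAux (1 / r) = fAux r := by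
    intro r h0
    by_cases h1 : r = 1
    · simp [h1]
    by_cases h2 : r = -1
    · norm_num [h2]
    have hi1 : 1 / r ≠ 1 := by
      intro h
      apply h1
      field_simp at h
      linarith
    have hi2 : 1 / r ≠ -1 := by
      intro h
      apply h2
      field_simp at h
      linarith
    rw [fAux_eq hi1 hi2, fAux_eq h1 h2]
    have hlog : Real.log ((1 / r) ^ 2) = -Real.log (r ^ 2) := by
      rw [one_div, inv_pow, Real.log_inv]
    rw [hlog]
    have hr2 : r ^ 2 - 1 ≠ 0 := sq_sub_one_ne h1 h2
    have hr2' : (1/r) ^ 2 - 1 ≠ 0 := sq_sub_one_ne hi1 hi2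
    have h1r : 1 - r ^ 2 ≠ 0 := fun h => hr2 (by linarith)
    field_simp
    ring
  have monoPos : StrictMonoOn fAux (Ioo (0:ℝ) 1) := by
    apply strictMonoOn_of_deriv_pos (convex_Ioo 0 1)
    · intro r hr
      exact (hasDerivAt_fAux (ne_of_gt hr.1) (ne_of_lt hr.2)
        (by intro h; rw [h] at hr; linarith [hr.1])).continuousAt.continuousWithinAt
    · intro r hr
      rw [interior_Ioo] at hr
      have h1 : r ≠ 1 := ne_of_lt hr.2
      have h2 : r ≠ -1 := by intro h; rw [h] at hr; linarith [hr.1]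
      rw [(hasDerivAt_fAux (ne_of_gt hr.1) h1 h2).deriv]
      have hx0 : 0 < r ^ 2 := pow_two_pos_of_ne_zero (ne_of_gt hr.1)
      have hx1 : r ^ 2 < 1 := by nlinarith [hr.1, hr.2]
      have hk := key_lt hx0 hx1
      have hd : (0:ℝ) < (r ^ 2 - 1) ^ 2 :=
        pow_two_pos_of_ne_zero (sq_sub_one_ne h1 h2)
      apply div_pos _ hd
      linarith
  have antiNeg : StrictAntiOn fAux (Ioi (1:ℝ)) := by
    apply strictAntiOn_of_deriv_neg (convex_Ioi 1)
    · intro r hr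
      have hr' : 1 < r := hr
      exact (hasDerivAt_fAux (by linarith) (ne_of_gt hr')
        (by linarith)).continuousAt.continuousWithinAt
    · intro r hr
      rw [interior_Ioi] at hr
      have h1 : r ≠ 1 := ne_of_gt hr
      have h2 : r ≠ -1 := by intro h; rw [h] at hr; norm_num at hr
      have hr' : 1 < r := hr
      rw [(hasDerivAt_fAux (by linarith) h1 h2).deriv]
      have hx1 : 1 < r ^ 2 := by nlinarith [hr']
      have hk := key_gt hx1
      have hd : (0:ℝ) < (r ^ 2 - 1) ^ 2 :=
        pow_two_pos_of_ne_zero (sq_sub_one_ne h1 h2)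
      apply div_neg_of_neg_of_pos _ hd
      linarith
  have f0 : fAux 0 = 0 := by
    norm_num [fAux]
  have fpos : ∀ r : ℝ, 0 < r → r < 1 → 0 < fAux r := by
    intro r hr0 hr1
    rw [fAux_eq (ne_of_lt hr1) (by linarith)]
    have hnum : r / (r ^ 2 - 1) < 0 :=
      div_neg_of_pos_of_neg hr0 (by nlinarith)
    have hlogneg : Real.log (r ^ 2) < 0 :=
      Real.log_neg (by positivity) (by nlinarith)
    exact mul_pos_of_neg_of_neg hnum hlogneg
  have fneg : ∀ r : ℝ, -1 < r → r < 0 → fAux r < 0 := by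
    intro r hr1 hr0
    have h1 : r ≠ 1 := by linarith
    have h2 : r ≠ -1 := by intro h; rw [h] at hr1; linarith
    have := odd r h1 h2
    have hpos := fpos (-r) (by linarith) (by linarith)
    linarith [this]
  refine ⟨odd, inv_eq', ?_, antiNeg⟩
  intro x hx y hy hxy
  simp only [mem_Ioo] at hx hy
  rcases lt_trichotomy x 0 with hx0 | hx0 | hx0
  · rcases lt_trichotomy y 0 with hy0 | hy0 | hy0
    · have hxn : x ≠ 1 := by linarith [hx.2]
      have hxn' : x ≠ -1 := by intro h; rw [h] at hx; linarith [hx.1]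
      have hyn : y ≠ 1 := by linarith [hy.2]
      have hyn' : y ≠ -1 := by intro h; rw [h] at hy; linarith [hy.1]
      have hmy : -y ∈ Ioo (0:ℝ) 1 := mem_Ioo.mpr ⟨by linarith, by linarith [hy.1]⟩
      have hmx : -x ∈ Ioo (0:ℝ) 1 := mem_Ioo.mpr ⟨by linarith, by linarith [hx.1]⟩
      have h := monoPos hmy hmx (by linarith)
      rw [odd x hxn hxn', odd y hyn hyn'] at h
      linarith
    · rw [hy0, f0]
      exact fneg x hx.1 hx0
    · exact lt_trans (fneg x hx.1 hx0) (fpos y hy0 hy.2)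
  · rw [hx0, f0]
    exact fpos y (hx0 ▸ hxy) hy.2
  · exact monoPos (mem_Ioo.mpr ⟨hx0, hx.2⟩) (mem_Ioo.mpr ⟨by linarith, hy.2⟩) hxy
end

section
/- Let ρ_A = x⁽¹⁾x⁽¹⁾* and ρ_B = x⁽²⁾x⁽²⁾* be positive definite density matrices (trace 1). Define Γ_x(y) = −E(x) − (1/2)·Tr[(y*y + yy*)·log(xx*)] for x with Tr(xx*)=1. If y = Σ_l c_l · y_l⁽¹⁾ ⊗ y_l⁽²⁾ with real c_l, Σ_l c_l² = 1, and Tr(y_l⁽¹⁾ y_{l'}⁽¹⁾*) = Tr(y_l⁽²⁾ y_{l'}⁽²⁾*) = δ_{ll'}, then Γ_{x⁽¹⁾⊗x⁽²⁾}(y) = Σ_l c_l²·(Γ_{x⁽¹⁾}(y_l⁽¹⁾) + Γ_{x⁽²⁾}(y_l⁽²⁾)). -/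
open Matrix Kronecker
open scoped ComplexOrder

variable {n : Type*} [Fintype n] [DecidableEq n]

/-- Matrix logarithm of a Hermitian matrix via its spectral decomposition. -/
noncomputable def matLog (A : Matrix n n ℂ) : Matrix n n ℂ :=
  if hA : A.IsHermitian then
    (hA.eigenvectorUnitary : Matrix n n ℂ) *
      Matrix.diagonal (fun i => (Real.log (hA.eigenvalues i) : ℂ)) *
        (hA.eigenvectorUnitary : Matrix n n ℂ)ᴴ
  else 0

/-- Von Neumann entropy `S(A) = −Tr(A log A)` computed via the eigenvalues. -/
noncomputable def vnEntropy (A : Matrix n n ℂ) : ℝ :=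
  if hA : A.IsHermitian then
    -∑ i, hA.eigenvalues i * Real.log (hA.eigenvalues i)
  else 0

/-- Entanglement entropy `E(x) = −Tr(xx* log xx*)` of the bipartite state with matrix `x`. -/
noncomputable def entE (x : Matrix n n ℂ) : ℝ := vnEntropy (x * xᴴ)

/-- `Γ_x(y) = −E(x) − (1/2)·Tr[(y*y + yy*)·log(xx*)]`. -/
noncomputable def Gamma (x y : Matrix n n ℂ) : ℝ :=
  -entE x - (1 / 2) * (Matrix.trace ((yᴴ * y + y * yᴴ) * matLog (x * xᴴ))).re

section Aux

open Polynomial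

/-- Conjugation by a unitary as an algebra hom. -/
noncomputable def unitaryConj (W : Matrix n n ℂ) (hW : W ∈ Matrix.unitaryGroup n ℂ) :
    Matrix n n ℂ →ₐ[ℂ] Matrix n n ℂ where
  toFun M := W * M * Wᴴ
  map_one' := by
    show W * 1 * Wᴴ = 1
    rw [mul_one]
    simpa [Matrix.star_eq_conjTranspose] using (Matrix.mem_unitaryGroup_iff.mp hW)
  map_mul' M N := by
    show W * (M * N) * Wᴴ = (W * M * Wᴴ) * (W * N * Wᴴ)
    have h : Wᴴ * W = 1 := by
      simpa [Matrix.star_eq_conjTranspose] using (Matrix.mem_unitaryGroup_iff'.mp hW)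
    calc W * (M * N) * Wᴴ = W * M * (Wᴴ * W) * N * Wᴴ := by rw [h, mul_one]; noncomm_ring
      _ = W * M * Wᴴ * (W * N * Wᴴ) := by noncomm_ring
  map_zero' := by show W * 0 * Wᴴ = 0; simp
  map_add' M N := by show W * (M + N) * Wᴴ = W * M * Wᴴ + W * N * Wᴴ; noncomm_ring
  commutes' c := by
    show W * algebraMap ℂ (Matrix n n ℂ) c * Wᴴ = algebraMap ℂ (Matrix n n ℂ) c
    have h : W * Wᴴ = 1 := by
      simpa [Matrix.star_eq_conjTranspose] using (Matrix.mem_unitaryGroup_iff.mp hW)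
    simp only [Algebra.algebraMap_eq_smul_one]
    rw [Matrix.mul_smul, mul_one, Matrix.smul_mul, h]

lemma aeval_unitary_conj (W : Matrix n n ℂ) (hW : W ∈ Matrix.unitaryGroup n ℂ)
    (D : Matrix n n ℂ) (q : ℂ[X]) :
    aeval (W * D * Wᴴ) q = W * aeval D q * Wᴴ := by
  have h := Polynomial.aeval_algHom_apply (unitaryConj W hW) D q
  have h2 : unitaryConj W hW D = W * D * Wᴴ := rfl
  have h3 : unitaryConj W hW (aeval D q) = W * aeval D q * Wᴴ := rfl
  rw [h2] at h
  rw [h, h3]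

lemma aeval_diagonal' (d : n → ℂ) (q : ℂ[X]) :
    aeval (Matrix.diagonal d) q = Matrix.diagonal (fun i => q.eval (d i)) := by
  have h1 : Matrix.diagonal d = Matrix.diagonalAlgHom (R := ℂ) d := rfl
  rw [h1, Polynomial.aeval_algHom_apply (Matrix.diagonalAlgHom (R := ℂ)) d q]
  have h2 : (aeval d q : n → ℂ) = fun i => q.eval (d i) := by
    funext i
    have := Polynomial.aeval_algHom_apply (Pi.evalAlgHom ℂ (fun _ : n => ℂ) i) d q
    simp only [Pi.evalAlgHom_apply] at this
    rw [← this, Polynomial.coe_aeval_eq_eval]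
  rw [h2]
  rfl

lemma det_unitary_conj (W : Matrix n n ℂ) (hW : W ∈ Matrix.unitaryGroup n ℂ)
    (X : Matrix n n ℂ) : det (W * X * Wᴴ) = det X := by
  have h : W * Wᴴ = 1 := by
    simpa [Matrix.star_eq_conjTranspose] using (Matrix.mem_unitaryGroup_iff.mp hW)
  rw [det_mul, det_mul]
  have h2 : det W * det Wᴴ = 1 := by rw [← det_mul, h, det_one]
  calc det W * det X * det Wᴴ = det X * (det W * det Wᴴ) := by ring
    _ = det X := by rw [h2, mul_one]

lemma conj_sub_smul (W : Matrix n n ℂ) (hW : W ∈ Matrix.unitaryGroup n ℂ)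
    (D : Matrix n n ℂ) (c : ℂ) :
    W * (D - c • 1) * Wᴴ = W * D * Wᴴ - c • 1 := by
  have h : W * Wᴴ = 1 := by
    simpa [Matrix.star_eq_conjTranspose] using (Matrix.mem_unitaryGroup_iff.mp hW)
  rw [mul_sub, sub_mul, Matrix.mul_smul, mul_one, Matrix.smul_mul, h]

lemma det_conj_diag_sub_smul (W : Matrix n n ℂ) (hW : W ∈ Matrix.unitaryGroup n ℂ)
    (d : n → ℂ) (c : ℂ) :
    det (W * Matrix.diagonal d * Wᴴ - c • 1) = ∏ i, (d i - c) := by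
  rw [← conj_sub_smul W hW, det_unitary_conj W hW, Matrix.smul_one_eq_diagonal]
  rw [Matrix.diagonal_sub, det_diagonal]

omit [Fintype n] [DecidableEq n] in
lemma kron_conjTranspose {m' : Type*}
    (A : Matrix n n ℂ) (B : Matrix m' m' ℂ) : (A ⊗ₖ B)ᴴ = Aᴴ ⊗ₖ Bᴴ := by
  ext ⟨i, j⟩ ⟨k, l⟩
  simp [Matrix.conjTranspose_apply, Matrix.kroneckerMap_apply]

lemma kron_unitary {m' : Type*} [Fintype m'] [DecidableEq m']
    {U : Matrix n n ℂ} {V : Matrix m' m' ℂ}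
    (hU : U ∈ Matrix.unitaryGroup n ℂ) (hV : V ∈ Matrix.unitaryGroup m' ℂ) :
    U ⊗ₖ V ∈ Matrix.unitaryGroup (n × m') ℂ := by
  rw [Matrix.mem_unitaryGroup_iff]
  have hU1 : U * Uᴴ = 1 := by
    simpa [Matrix.star_eq_conjTranspose] using (Matrix.mem_unitaryGroup_iff.mp hU)
  have hV1 : V * Vᴴ = 1 := by
    simpa [Matrix.star_eq_conjTranspose] using (Matrix.mem_unitaryGroup_iff.mp hV)
  rw [Matrix.star_eq_conjTranspose, kron_conjTranspose, ← Matrix.mul_kronecker_mul,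
    hU1, hV1, Matrix.one_kronecker_one]

lemma isHermitian_kron {m₁ m₂ : Type*} [Fintype m₁] [DecidableEq m₁] [Fintype m₂] [DecidableEq m₂]
    {A : Matrix m₁ m₁ ℂ} {B : Matrix m₂ m₂ ℂ} (hA : A.IsHermitian) (hB : B.IsHermitian) :
    (A ⊗ₖ B).IsHermitian := by
  show (A ⊗ₖ B)ᴴ = A ⊗ₖ B
  rw [kron_conjTranspose, hA.eq, hB.eq]

lemma matLog_kron {m₁ m₂ : Type*} [Fintype m₁] [DecidableEq m₁] [Fintype m₂] [DecidableEq m₂]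
    {A : Matrix m₁ m₁ ℂ} {B : Matrix m₂ m₂ ℂ} (hA : A.PosDef) (hB : B.PosDef) :
    matLog (A ⊗ₖ B) = matLog A ⊗ₖ (1 : Matrix m₂ m₂ ℂ) + (1 : Matrix m₁ m₁ ℂ) ⊗ₖ matLog B := by
  have hAh := hA.1
  have hBh := hB.1
  have hMh : (A ⊗ₖ B).IsHermitian := isHermitian_kron hAh hBh
  set U : Matrix m₁ m₁ ℂ := (hAh.eigenvectorUnitary : Matrix m₁ m₁ ℂ) with hUdef
  set V : Matrix m₂ m₂ ℂ := (hBh.eigenvectorUnitary : Matrix m₂ m₂ ℂ) with hVdef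
  set W : Matrix (m₁ × m₂) (m₁ × m₂) ℂ := (hMh.eigenvectorUnitary : Matrix (m₁ × m₂) (m₁ × m₂) ℂ)
    with hWdef
  have hU : U ∈ Matrix.unitaryGroup m₁ ℂ := (hAh.eigenvectorUnitary).2
  have hV : V ∈ Matrix.unitaryGroup m₂ ℂ := (hBh.eigenvectorUnitary).2
  have hW : W ∈ Matrix.unitaryGroup (m₁ × m₂) ℂ := (hMh.eigenvectorUnitary).2
  set μ := hAh.eigenvalues with hμdef
  set ν := hBh.eigenvalues with hνdef
  set lam := hMh.eigenvalues with hlamdef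
  have specA : A = U * Matrix.diagonal (fun i => (μ i : ℂ)) * Uᴴ := hAh.spectral_theorem
  have specB : B = V * Matrix.diagonal (fun i => (ν i : ℂ)) * Vᴴ := hBh.spectral_theorem
  have specM : A ⊗ₖ B = W * Matrix.diagonal (fun k => (lam k : ℂ)) * Wᴴ := hMh.spectral_theorem
  have spec2 : A ⊗ₖ B =
      (U ⊗ₖ V) * Matrix.diagonal (fun p : m₁ × m₂ => ((μ p.1 * ν p.2 : ℝ) : ℂ)) * (U ⊗ₖ V)ᴴ := by
    conv_lhs => rw [specA, specB]
    rw [Matrix.mul_kronecker_mul, Matrix.mul_kronecker_mul, Matrix.diagonal_kronecker_diagonal,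
      ← kron_conjTranspose]
    push_cast
    rfl
  have hUV : U ⊗ₖ V ∈ Matrix.unitaryGroup (m₁ × m₂) ℂ := kron_unitary hU hV
  -- the interpolating polynomial
  set s : Finset ℂ := Finset.image (fun p : m₁ × m₂ => ((μ p.1 * ν p.2 : ℝ) : ℂ)) Finset.univ
    with hsdef
  set r : ℂ → ℂ := fun z => (Real.log z.re : ℂ) with hrdef
  set q : ℂ[X] := Lagrange.interpolate s id r with hqdef
  have hq : ∀ z ∈ s, q.eval z = r z := by
    intro z hz
    rw [hqdef]
    simpa using Lagrange.eval_interpolate_at_node r (Set.injOn_id _) hz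
  -- every eigenvalue of the kronecker product is a product of eigenvalues
  have hmem : ∀ k, ((lam k : ℂ)) ∈ s := by
    intro k
    have hdet1 : det (A ⊗ₖ B - (lam k : ℂ) • 1) = ∏ k', ((lam k' : ℂ) - (lam k : ℂ)) := by
      conv_lhs => rw [specM]
      exact det_conj_diag_sub_smul W hW _ _
    have hdet0 : det (A ⊗ₖ B - (lam k : ℂ) • 1) = 0 := by
      rw [hdet1]
      exact Finset.prod_eq_zero (Finset.mem_univ k) (sub_self _)
    have hdet2 : (∏ p : m₁ × m₂, (((μ p.1 * ν p.2 : ℝ) : ℂ) - (lam k : ℂ))) = 0 := by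
      rw [← det_conj_diag_sub_smul (U ⊗ₖ V) hUV _ _, ← spec2, hdet0]
    obtain ⟨p, -, hp⟩ := Finset.prod_eq_zero_iff.mp hdet2
    have hpe : ((μ p.1 * ν p.2 : ℝ) : ℂ) = (lam k : ℂ) := by linear_combination hp
    rw [hsdef]
    exact Finset.mem_image.mpr ⟨p, Finset.mem_univ p, hpe⟩
  -- evaluate the polynomial at the kronecker product, first way
  have way1 : aeval (A ⊗ₖ B) q = matLog (A ⊗ₖ B) := by
    conv_lhs => rw [specM]
    rw [aeval_unitary_conj W hW, aeval_diagonal', matLog, dif_pos hMh]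
    have hev : (fun k : m₁ × m₂ => q.eval ((lam k : ℂ)))
        = fun k => ((Real.log (hMh.eigenvalues k) : ℝ) : ℂ) := by
      funext k
      rw [hq _ (hmem k), hrdef]
      simp [hlamdef]
    rw [hev]
  -- second way
  have way2 : aeval (A ⊗ₖ B) q
      = matLog A ⊗ₖ (1 : Matrix m₂ m₂ ℂ) + (1 : Matrix m₁ m₁ ℂ) ⊗ₖ matLog B := by
    conv_lhs => rw [spec2]
    rw [aeval_unitary_conj _ hUV, aeval_diagonal']
    have hvals : (fun p : m₁ × m₂ => q.eval ((μ p.1 * ν p.2 : ℝ) : ℂ))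
        = fun p => ((Real.log (μ p.1) : ℂ) + (Real.log (ν p.2) : ℂ)) := by
      funext p
      rw [hq _ (Finset.mem_image.mpr ⟨p, Finset.mem_univ p, rfl⟩), hrdef]
      simp only [Complex.ofReal_re]
      rw [Real.log_mul (hA.eigenvalues_pos p.1).ne' (hB.eigenvalues_pos p.2).ne']
      push_cast
      rfl
    rw [hvals]
    have hsplit : Matrix.diagonal (fun p : m₁ × m₂ =>
          ((Real.log (μ p.1) : ℂ) + (Real.log (ν p.2) : ℂ)))
        = Matrix.diagonal (fun i => (Real.log (μ i) : ℂ)) ⊗ₖ (1 : Matrix m₂ m₂ ℂ)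
          + (1 : Matrix m₁ m₁ ℂ) ⊗ₖ Matrix.diagonal (fun j => (Real.log (ν j) : ℂ)) := by
      ext ⟨i, j⟩ ⟨k, l⟩
      by_cases hik : i = k <;> by_cases hjl : j = l <;>
        simp [Matrix.diagonal_apply, Matrix.one_apply, hik, hjl, Prod.ext_iff]
    rw [hsplit, mul_add, add_mul, kron_conjTranspose, ← Matrix.mul_kronecker_mul,
      ← Matrix.mul_kronecker_mul, ← Matrix.mul_kronecker_mul, ← Matrix.mul_kronecker_mul]
    have hV1 : V * 1 * Vᴴ = 1 := by
      rw [mul_one]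
      simpa [Matrix.star_eq_conjTranspose] using (Matrix.mem_unitaryGroup_iff.mp hV)
    have hU1 : U * 1 * Uᴴ = 1 := by
      rw [mul_one]
      simpa [Matrix.star_eq_conjTranspose] using (Matrix.mem_unitaryGroup_iff.mp hU)
    rw [hV1, hU1, matLog, dif_pos hAh, matLog, dif_pos hBh]
  rw [← way1, way2]

lemma trace_unitary_conj (W : Matrix n n ℂ) (hW : W ∈ Matrix.unitaryGroup n ℂ)
    (X : Matrix n n ℂ) : Matrix.trace (W * X * Wᴴ) = Matrix.trace X := by
  rw [Matrix.trace_mul_cycle]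
  have h : Wᴴ * W = 1 := by
    simpa [Matrix.star_eq_conjTranspose] using (Matrix.mem_unitaryGroup_iff'.mp hW)
  rw [h, one_mul]

lemma trace_mul_matLog {A : Matrix n n ℂ} (hA : A.IsHermitian) :
    Matrix.trace (A * matLog A)
      = ((∑ i, hA.eigenvalues i * Real.log (hA.eigenvalues i) : ℝ) : ℂ) := by
  set U : Matrix n n ℂ := (hA.eigenvectorUnitary : Matrix n n ℂ) with hUdef
  have hU : U ∈ Matrix.unitaryGroup n ℂ := (hA.eigenvectorUnitary).2
  have hdiag : Uᴴ * A * U = Matrix.diagonal (RCLike.ofReal ∘ hA.eigenvalues) := by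
    have hUU : Uᴴ * U = 1 := by
      simpa [Matrix.star_eq_conjTranspose] using (Matrix.mem_unitaryGroup_iff'.mp hU)
    have hUU' : U * Uᴴ = 1 := by
      simpa [Matrix.star_eq_conjTranspose] using (Matrix.mem_unitaryGroup_iff.mp hU)
    conv_lhs => rw [hA.spectral_theorem, Unitary.conjStarAlgAut_apply]
    rw [← hUdef, Matrix.star_eq_conjTranspose, ← mul_assoc, ← mul_assoc, hUU, one_mul,
      mul_assoc, hUU, mul_one]
  rw [matLog, dif_pos hA, ← hUdef, ← mul_assoc, ← mul_assoc, Matrix.trace_mul_cycle,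
    ← mul_assoc, hdiag, Matrix.diagonal_mul_diagonal, Matrix.trace_diagonal]
  push_cast
  rfl

lemma vnEntropy_eq_trace {A : Matrix n n ℂ} (hA : A.IsHermitian) :
    vnEntropy A = -(Matrix.trace (A * matLog A)).re := by
  rw [vnEntropy, dif_pos hA, trace_mul_matLog hA]
  simp

lemma vnEntropy_kron {m₁ m₂ : Type*} [Fintype m₁] [DecidableEq m₁] [Fintype m₂] [DecidableEq m₂]
    {A : Matrix m₁ m₁ ℂ} {B : Matrix m₂ m₂ ℂ} (hA : A.PosDef) (hB : B.PosDef)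
    (htrA : Matrix.trace A = 1) (htrB : Matrix.trace B = 1) :
    vnEntropy (A ⊗ₖ B) = vnEntropy A + vnEntropy B := by
  have hMh := isHermitian_kron hA.1 hB.1
  rw [vnEntropy_eq_trace hMh, vnEntropy_eq_trace hA.1, vnEntropy_eq_trace hB.1,
    matLog_kron hA hB, mul_add, Matrix.trace_add, ← Matrix.mul_kronecker_mul,
    ← Matrix.mul_kronecker_mul, Matrix.trace_kronecker, Matrix.trace_kronecker,
    mul_one]
  simp [htrA, htrB, Complex.add_re]
  ring

lemma kronSumCollapse {L : ℕ} (c : Fin L → ℝ) (f g : Fin L → Fin L → ℂ)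
    (hg : ∀ l l', g l l' = if l' = l then 1 else 0) :
    ∑ l, ∑ l', ((c l : ℂ) * (c l')) * (f l l' * g l l')
      = ∑ l, ((c l : ℂ)) ^ 2 * f l l := by
  refine Finset.sum_congr rfl fun l _ => ?_
  rw [Finset.sum_eq_single l]
  · rw [hg, if_pos rfl, mul_one, sq]
  · intro l' _ hne
    rw [hg, if_neg hne, mul_zero, mul_zero]
  · intro h; exact absurd (Finset.mem_univ l) h

lemma kronSumCollapse' {L : ℕ} (c : Fin L → ℝ) (f g : Fin L → Fin L → ℂ)
    (hg : ∀ l l', g l l' = if l' = l then 1 else 0) :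
    ∑ l, ∑ l', ((c l : ℂ) * (c l')) * (g l l' * f l l')
      = ∑ l, ((c l : ℂ)) ^ 2 * f l l := by
  rw [← kronSumCollapse c f g hg]
  refine Finset.sum_congr rfl fun l _ => Finset.sum_congr rfl fun l' _ => by ring

lemma trace_kron_sum {m₁ m₂ : Type*} [Fintype m₁] [DecidableEq m₁] [Fintype m₂] [DecidableEq m₂]
    {L : ℕ} (c : Fin L → ℝ)
    (u u' : Fin L → Matrix m₁ m₁ ℂ) (w w' : Fin L → Matrix m₂ m₂ ℂ)
    (P : Matrix m₁ m₁ ℂ) (Q : Matrix m₂ m₂ ℂ) :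
    Matrix.trace ((∑ l, (c l : ℂ) • (u l ⊗ₖ w l)) * (∑ l, (c l : ℂ) • (u' l ⊗ₖ w' l)) * (P ⊗ₖ Q))
      = ∑ l, ∑ l', ((c l : ℂ) * (c l'))
          * (Matrix.trace (u l * u' l' * P) * Matrix.trace (w l * w' l' * Q)) := by
  simp only [Finset.sum_mul, Finset.mul_sum, Matrix.trace_sum, Matrix.smul_mul, Matrix.mul_smul,
    Matrix.trace_smul, smul_smul, ← Matrix.mul_kronecker_mul, Matrix.trace_kronecker, smul_eq_mul]
  rw [Finset.sum_comm]
  refine Finset.sum_congr rfl fun l _ => Finset.sum_congr rfl fun l' _ => by ring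

lemma final_sum {L : ℕ} (c : Fin L → ℝ) (hc : ∑ l, c l ^ 2 = 1) (E : ℝ) (t : Fin L → ℝ) :
    -E - (1 / 2) * ∑ l, c l ^ 2 * t l = ∑ l, c l ^ 2 * (-E - (1 / 2) * t l) := by
  have h1 : -E = ∑ l, c l ^ 2 * (-E) := by rw [← Finset.sum_mul, hc, one_mul]
  calc -E - (1 / 2) * ∑ l, c l ^ 2 * t l
      = (∑ l, c l ^ 2 * (-E)) - ∑ l, (1 / 2) * (c l ^ 2 * t l) := by
        rw [← h1, Finset.mul_sum]
    _ = ∑ l, (c l ^ 2 * (-E) - (1 / 2) * (c l ^ 2 * t l)) := by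
        rw [Finset.sum_sub_distrib]
    _ = ∑ l, c l ^ 2 * (-E - (1 / 2) * t l) := by
        refine Finset.sum_congr rfl fun l _ => by ring

end Aux

/-- If `y = Σ_l c_l · y_l⁽¹⁾ ⊗ y_l⁽²⁾` with real `c_l`, `Σ c_l² = 1`, and the families
`{y_l⁽¹⁾}`, `{y_l⁽²⁾}` Hilbert–Schmidt orthonormal, then
`Γ_{x⁽¹⁾⊗x⁽²⁾}(y) = Σ_l c_l²·(Γ_{x⁽¹⁾}(y_l⁽¹⁾) + Γ_{x⁽²⁾}(y_l⁽²⁾))`. -/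
theorem Gamma_additive {n₁ n₂ L : ℕ}
    (x₁ : Matrix (Fin n₁) (Fin n₁) ℂ) (x₂ : Matrix (Fin n₂) (Fin n₂) ℂ)
    (hx₁ : (x₁ * x₁ᴴ).PosDef) (hx₂ : (x₂ * x₂ᴴ).PosDef)
    (htr₁ : Matrix.trace (x₁ * x₁ᴴ) = 1) (htr₂ : Matrix.trace (x₂ * x₂ᴴ) = 1)
    (c : Fin L → ℝ) (hc : ∑ l, (c l) ^ 2 = 1)
    (y₁ : Fin L → Matrix (Fin n₁) (Fin n₁) ℂ)
    (y₂ : Fin L → Matrix (Fin n₂) (Fin n₂) ℂ)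
    (hy₁ : ∀ l l', Matrix.trace (y₁ l * (y₁ l')ᴴ) = if l = l' then 1 else 0)
    (hy₂ : ∀ l l', Matrix.trace (y₂ l * (y₂ l')ᴴ) = if l = l' then 1 else 0) :
    Gamma (x₁ ⊗ₖ x₂) (∑ l, (c l : ℂ) • (y₁ l ⊗ₖ y₂ l)) =
      ∑ l, (c l) ^ 2 * (Gamma x₁ (y₁ l) + Gamma x₂ (y₂ l)) := by
  set A := x₁ * x₁ᴴ with hAdef
  set B := x₂ * x₂ᴴ with hBdef
  set y : Matrix (Fin n₁ × Fin n₂) (Fin n₁ × Fin n₂) ℂ := ∑ l, (c l : ℂ) • (y₁ l ⊗ₖ y₂ l)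
    with hydef
  have hXX : (x₁ ⊗ₖ x₂) * (x₁ ⊗ₖ x₂)ᴴ = A ⊗ₖ B := by
    rw [kron_conjTranspose, ← Matrix.mul_kronecker_mul]
  -- conjugate transpose of y
  have hyH : yᴴ = ∑ l, (c l : ℂ) • ((y₁ l)ᴴ ⊗ₖ (y₂ l)ᴴ) := by
    rw [hydef, Matrix.conjTranspose_sum]
    refine Finset.sum_congr rfl fun l _ => ?_
    rw [Matrix.conjTranspose_smul, kron_conjTranspose]
    simp [Complex.star_def, Complex.conj_ofReal]
  set LA := matLog A with hLAdef
  set LB := matLog B with hLBdef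
  -- entropy additivity
  have hE : entE (x₁ ⊗ₖ x₂) = entE x₁ + entE x₂ := by
    rw [entE, entE, entE, hXX, ← hAdef, ← hBdef]
    exact vnEntropy_kron hx₁ hx₂ htr₁ htr₂
  -- trace computation
  have horth₁ : ∀ l l', Matrix.trace ((y₁ l)ᴴ * y₁ l' * (1 : Matrix (Fin n₁) (Fin n₁) ℂ))
      = if l' = l then 1 else 0 := by
    intro l l'
    rw [mul_one, Matrix.trace_mul_comm]
    exact hy₁ l' l
  have horth₂ : ∀ l l', Matrix.trace ((y₂ l)ᴴ * y₂ l' * (1 : Matrix (Fin n₂) (Fin n₂) ℂ))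
      = if l' = l then 1 else 0 := by
    intro l l'
    rw [mul_one, Matrix.trace_mul_comm]
    exact hy₂ l' l
  have horth₁' : ∀ l l', Matrix.trace (y₁ l * (y₁ l')ᴴ * (1 : Matrix (Fin n₁) (Fin n₁) ℂ))
      = if l' = l then 1 else 0 := by
    intro l l'
    rw [mul_one, hy₁ l l']
    simp [eq_comm]
  have horth₂' : ∀ l l', Matrix.trace (y₂ l * (y₂ l')ᴴ * (1 : Matrix (Fin n₂) (Fin n₂) ℂ))
      = if l' = l then 1 else 0 := by
    intro l l'
    rw [mul_one, hy₂ l l']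
    simp [eq_comm]
  have hT : Matrix.trace ((yᴴ * y + y * yᴴ) * (LA ⊗ₖ (1 : Matrix (Fin n₂) (Fin n₂) ℂ)
        + (1 : Matrix (Fin n₁) (Fin n₁) ℂ) ⊗ₖ LB))
      = ∑ l, ((c l : ℂ)) ^ 2 *
          (Matrix.trace ((y₁ l)ᴴ * y₁ l * LA) + Matrix.trace (y₁ l * (y₁ l)ᴴ * LA)
            + Matrix.trace ((y₂ l)ᴴ * y₂ l * LB) + Matrix.trace (y₂ l * (y₂ l)ᴴ * LB)) := by
    rw [add_mul, mul_add, mul_add, Matrix.trace_add, Matrix.trace_add, Matrix.trace_add]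
    rw [hydef, hyH]
    rw [trace_kron_sum c _ _ _ _ LA 1, trace_kron_sum c _ _ _ _ (1 : Matrix (Fin n₁) (Fin n₁) ℂ) LB,
      trace_kron_sum c _ _ _ _ LA 1, trace_kron_sum c _ _ _ _ (1 : Matrix (Fin n₁) (Fin n₁) ℂ) LB]
    rw [kronSumCollapse c _ _ horth₂, kronSumCollapse' c _ _ horth₁,
      kronSumCollapse c _ _ horth₂', kronSumCollapse' c _ _ horth₁']
    rw [← Finset.sum_add_distrib, ← Finset.sum_add_distrib, ← Finset.sum_add_distrib]
    refine Finset.sum_congr rfl fun l _ => by ring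
  -- put everything together
  rw [Gamma, hXX, matLog_kron hx₁ hx₂, ← hLAdef, ← hLBdef, hE, hT]
  have hre : (∑ l, ((c l : ℂ)) ^ 2 *
          (Matrix.trace ((y₁ l)ᴴ * y₁ l * LA) + Matrix.trace (y₁ l * (y₁ l)ᴴ * LA)
            + Matrix.trace ((y₂ l)ᴴ * y₂ l * LB) + Matrix.trace (y₂ l * (y₂ l)ᴴ * LB))).re
      = ∑ l, (c l) ^ 2 *
          ((Matrix.trace ((y₁ l)ᴴ * y₁ l * LA)).re + (Matrix.trace (y₁ l * (y₁ l)ᴴ * LA)).re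
            + (Matrix.trace ((y₂ l)ᴴ * y₂ l * LB)).re
            + (Matrix.trace (y₂ l * (y₂ l)ᴴ * LB)).re) := by
    rw [Complex.re_sum]
    refine Finset.sum_congr rfl fun l _ => ?_
    rw [show ((c l : ℂ)) ^ 2 = (((c l) ^ 2 : ℝ) : ℂ) by push_cast; ring,
      Complex.re_ofReal_mul]
    simp [Complex.add_re]
  rw [hre]
  have hgamma : ∀ l, Gamma x₁ (y₁ l) + Gamma x₂ (y₂ l)
      = -entE x₁ - entE x₂
        - (1 / 2) * ((Matrix.trace ((y₁ l)ᴴ * y₁ l * LA)).re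
          + (Matrix.trace (y₁ l * (y₁ l)ᴴ * LA)).re
          + (Matrix.trace ((y₂ l)ᴴ * y₂ l * LB)).re
          + (Matrix.trace (y₂ l * (y₂ l)ᴴ * LB)).re) := by
    intro l
    rw [Gamma, Gamma, ← hAdef, ← hBdef, ← hLAdef, ← hLBdef, add_mul, add_mul,
      Matrix.trace_add, Matrix.trace_add, Complex.add_re, Complex.add_re]
    ring
  refine (final_sum c hc (entE x₁ + entE x₂) _).trans ?_
  refine Finset.sum_congr rfl fun l _ => ?_
  rw [hgamma l]
  ring
end
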